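/- Let S_1=(O_1,M,S) and S_2=(O_2,M,S) be OBDA specifications with the same GAV mappings and source schema, with FO ontologies satisfying O_1 ⊨ O_2 (every model of O_1 is a model of O_2). If a source UCQ q_s is UCQ-expressible in S_1, then q_s is UCQ-expressible in S_2. In other words, logically weakening the ontology never destroys expressibility of source queries. -/

import Mathlib

/-- A relational schema: a collection of relation names with arities. -/
structure Schema : Type 1 where
  Rel : Type
  arity : Rel → ℕ

/-- A fact over schema `S` with constants from `C`. -/
def Fct (S : Schema) (C : Type) : Type := (R : S.Rel) × (Fin (S.arity R) → C)

/-- Apply a function on constants to a fact. -/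
def mapFct {S : Schema} {C D : Type} (h : C → D) (f : Fct S C) : Fct S D :=
  ⟨f.1, h ∘ f.2⟩

/-- A database over schema `S` with constants from `C`: a set of facts. -/
abbrev DB (S : Schema) (C : Type) : Type := Set (Fct S C)

/-- A conjunctive query over schema `S` with `n` answer variables. -/
structure CQ (S : Schema) (n : ℕ) : Type 1 where
  V : Type
  ansVar : Fin n → V
  atoms : DB S V

/-- `t` is an answer to the CQ `q` on the database `D`. -/
def cqAns {S : Schema} {n : ℕ} (q : CQ S n) {C : Type} (D : DB S C) (t : Fin n → C) : Prop :=
  ∃ h : q.V → C, (∀ a ∈ q.atoms, mapFct h a ∈ D) ∧ h ∘ q.ansVar = t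

/-- A (possibly infinitary) union of conjunctive queries. -/
abbrev UCQ (S : Schema) (n : ℕ) : Type 1 := Set (CQ S n)

/-- `t` is an answer to the UCQ `q` on the database `D`. -/
def ucqAns {S : Schema} {n : ℕ} (q : UCQ S n) {C : Type} (D : DB S C) (t : Fin n → C) : Prop :=
  ∃ p ∈ q, cqAns p D t

/-- Containment of UCQs over all databases of the schema. -/
def Contained {S : Schema} {n : ℕ} (q1 q2 : UCQ S n) : Prop :=
  ∀ (C : Type) (D : DB S C) (t : Fin n → C), ucqAns q1 D t → ucqAns q2 D t

/-- A homomorphism from the CQ `q` to the CQ `p` (preserving atoms and answer variables). -/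
def CQHom {S : Schema} {n : ℕ} (q p : CQ S n) : Prop :=
  ∃ h : q.V → p.V, (∀ a ∈ q.atoms, mapFct h a ∈ p.atoms) ∧ h ∘ q.ansVar = p.ansVar

/-- A GAV mapping from schema `S` to schema `T`: a CQ body over `S` (with variable
type `B`) and a single head atom over `T` whose variables occur in the body. -/
structure GAV (S T : Schema) : Type 1 where
  B : Type
  body : DB S B
  headR : T.Rel
  headV : Fin (T.arity headR) → B

/-- The head atom of a GAV mapping, as a fact over its body variables. -/
def GAV.headFct {S T : Schema} (m : GAV S T) : Fct T m.B := ⟨m.headR, m.headV⟩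

/-- Forward application of a set of GAV mappings to a database (or a CQ viewed as one). -/
def applyM {S T : Schema} (M : Set (GAV S T)) {C : Type} (D : DB S C) : DB T C :=
  { f | ∃ m ∈ M, ∃ h : m.B → C, (∀ a ∈ m.body, mapFct h a ∈ D) ∧ f = mapFct h m.headFct }

/-- Forward application of GAV mappings to a CQ (viewed as a database, keeping answer variables). -/
def applyMCQ {S T : Schema} (M : Set (GAV S T)) {n : ℕ} (q : CQ S n) : CQ T n :=
  ⟨q.V, q.ansVar, applyM M q.atoms⟩

/-- Forward application of GAV mappings to a UCQ, disjunct by disjunct. -/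
def applyMUCQ {S T : Schema} (M : Set (GAV S T)) {n : ℕ} (q : UCQ S n) : UCQ T n :=
  { p | ∃ r ∈ q, p = applyMCQ M r }

/-- Variables of a backward-translated CQ: the original variables plus a fresh copy
of the body variables of the chosen mapping, for each atom. -/
abbrev backV {S T : Schema} {n : ℕ} (q : CQ T n) (c : q.atoms → GAV S T) : Type :=
  q.V ⊕ (α : q.atoms) × (c α).B

/-- The CQ obtained from `q` by applying backwards, at each atom `α`, the chosen
mapping `c α` along the unifier `u α`. -/
def backCQ {S T : Schema} {n : ℕ} (q : CQ T n) (c : q.atoms → GAV S T)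
    (u : (α : q.atoms) → (c α).B → backV q c) : CQ S n where
  V := backV q c
  ansVar := Sum.inl ∘ q.ansVar
  atoms := { f | ∃ α : q.atoms, ∃ a ∈ (c α).body, f = mapFct (u α) a }

/-- `p` is a disjunct of `M⁻(q)`: it arises by choosing for each atom of `q` a suitable
mapping of `M`, instantiating its body along the most general unifier of its head with the
atom, and using fresh variables for all body variables not occurring in the head. -/
def IsBackDisjunct {S T : Schema} {n : ℕ} (M : Set (GAV S T)) (q : CQ T n) (p : CQ S n) : Prop :=
  ∃ (c : q.atoms → GAV S T) (u : (α : q.atoms) → (c α).B → backV q c),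
    (∀ α, c α ∈ M) ∧
    (∀ α : q.atoms, mapFct (u α) (c α).headFct =
      mapFct (fun v => (Sum.inl v : backV q c)) α.1) ∧
    (∀ (α : q.atoms) (b : (c α).B), (∀ i, (c α).headV i ≠ b) → u α b = Sum.inr ⟨α, b⟩) ∧
    p = backCQ q c u

/-- Backward application `M⁻` of a set of GAV mappings to a (possibly infinitary) UCQ. -/
def backUCQ {S T : Schema} {n : ℕ} (M : Set (GAV S T)) (r : UCQ T n) : UCQ S n :=
  { p | ∃ q ∈ r, IsBackDisjunct M q p }

/-- An ontology over schema `T`, taken semantically: the class of its models, i.e.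
a class of (possibly infinite) `T`-databases over arbitrary domains. -/
def Ontology (T : Schema) : Type 1 := (C : Type) → DB T C → Prop

/-- `t` is a certain answer to the OMQ `(O, T, q)` on the ABox `A`: in every model of
`A` and `O` (an interpretation into which `A` maps homomorphically via the
interpretation `ι` of its constants), `ι ∘ t` is an answer to `q`. -/
def certAns {T : Schema} {n : ℕ} (O : Ontology T) (q : UCQ T n) {C : Type}
    (A : DB T C) (t : Fin n → C) : Prop :=
  ∀ (E : Type) (I : DB T E) (ι : C → E),
    (∀ f ∈ A, mapFct ι f ∈ I) → O E I → ucqAns q I (ι ∘ t)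

/-- `qr` is a (possibly infinitary) UCQ rewriting of the OMQ `(O, T, q)`: on every
ABox, the answers to `qr` coincide with the certain answers of the OMQ. -/
def IsRewriting {T : Schema} {n : ℕ} (O : Ontology T) (q qr : UCQ T n) : Prop :=
  ∀ (C : Type) (A : DB T C) (t : Fin n → C), ucqAns qr A t ↔ certAns O q A t

/-- `qt` is a realization of the source query `qs` in the OBDA specification `(O, M, S)`:
for every source database `D`, the answers to `qs` on `D` coincide with the certain
answers to the OMQ `(O, sch(M), qt)` on `M(D)`. -/
def IsRealization {S T : Schema} {n : ℕ} (O : Ontology T) (M : Set (GAV S T))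
    (qs : UCQ S n) (qt : UCQ T n) : Prop :=
  ∀ (C : Type) (D : DB S C) (t : Fin n → C), ucqAns qs D t ↔ certAns O qt (applyM M D) t
theorem expressibility_monotone_in_ontology (S T : Schema) (n : ℕ)
    (O1 O2 : Ontology T) (M : Set (GAV S T)) (qs : UCQ S n)
    (hent : ∀ (C : Type) (I : DB T C), O1 C I → O2 C I)
    (hexp : ∃ qt : UCQ T n, IsRealization O1 M qs qt) :
    ∃ qt : UCQ T n, IsRealization O2 M qs qt := by
  obtain ⟨qt, hqt⟩ := hexp
  refine ⟨applyMUCQ M qs, fun C D t => ?_⟩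
  constructor
  · rintro ⟨p, hp, h, hhat, hha⟩
    intro E I ι hMDI _hO2
    refine ⟨applyMCQ M p, ⟨p, hp, rfl⟩, ι ∘ h, ?_, ?_⟩
    · rintro a ⟨m, hm, h', hb, rfl⟩
      have hfact : mapFct (h ∘ h') m.headFct ∈ applyM M D := by
        refine ⟨m, hm, h ∘ h', fun b hbb => ?_, rfl⟩
        have : mapFct (h ∘ h') b = mapFct h (mapFct h' b) := rfl
        rw [this]
        exact hhat _ (hb b hbb)
      have := hMDI _ hfact
      have heq : mapFct (ι ∘ h) (mapFct h' m.headFct)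
          = mapFct ι (mapFct (h ∘ h') m.headFct) := rfl
      show mapFct ι (mapFct (h ∘ h') m.headFct) ∈ I
      exact this
    · show (ι ∘ h) ∘ p.ansVar = ι ∘ t
      rw [Function.comp_assoc, hha]
  · intro hc
    have hc1 : certAns O1 (applyMUCQ M qs) (applyM M D) t :=
      fun E I ι hA hO => hc E I ι hA (hent E I hO)
    rw [hqt C D t]
    intro E I ι hMDI hO1
    obtain ⟨p', ⟨p, hp, rfl⟩, g, hg, hga⟩ := hc1 E I ι hMDI hO1
    have h1 : ucqAns qs p.atoms p.ansVar := by
      refine ⟨p, hp, id, fun a ha => ?_, ?_⟩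
      · have : mapFct (id : p.V → p.V) a = a := by
          cases a; simp [mapFct]; rfl
        rwa [this]
      · simp
    have h2 := (hqt p.V p.atoms p.ansVar).mp h1 E I g hg hO1
    exact hga ▸ h2
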